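/- exp(x − (max(x,0))²/2) ≤ 1 + x + (max(−x,0))²/2 for all real x. As a step of the proof: e^{−x} + x − 1 ≤ x²/2 for all x ≥ 0. -/

import Mathlib

open Real

private lemma aux1 {x : ℝ} (hx : 0 ≤ x) : 1 ≤ Real.exp x * (1 - x + x ^ 2 / 2) := by
  set f : ℝ → ℝ := fun x => Real.exp x * (1 - x + x ^ 2 / 2) with hf
  have hderiv : ∀ y : ℝ, HasDerivAt f (Real.exp y * (y ^ 2 / 2)) y := by
    intro y
    have h1 : HasDerivAt (fun y : ℝ => 1 - y + y ^ 2 / 2) (-1 + y) y := by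
      have := ((hasDerivAt_id y).pow 2).div_const 2
      have := ((hasDerivAt_const y (1:ℝ)).sub (hasDerivAt_id y)).add this
      simp at this; exact this
    have := (Real.hasDerivAt_exp y).mul h1
    exact this.congr_deriv (by ring)
  have hmono : MonotoneOn f (Set.Ici (0:ℝ)) := by
    apply monotoneOn_of_deriv_nonneg (convex_Ici 0)
    · exact (Continuous.mul Real.continuous_exp (by continuity)).continuousOn
    · intro y _
      exact (hderiv y).differentiableAt.differentiableWithinAt
    · intro y hy
      rw [(hderiv y).deriv]
      positivity
  have := hmono (Set.mem_Ici.mpr le_rfl) (Set.mem_Ici.mpr hx) hx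
  simpa [hf] using this

private lemma aux2 {x : ℝ} (hx : 0 ≤ x) : 1 ≤ (1 + x) * Real.exp (-x + x ^ 2 / 2) := by
  set f : ℝ → ℝ := fun x => (1 + x) * Real.exp (-x + x ^ 2 / 2) with hf
  have hderiv : ∀ y : ℝ, HasDerivAt f (y ^ 2 * Real.exp (-y + y ^ 2 / 2)) y := by
    intro y
    have h1 : HasDerivAt (fun y : ℝ => -y + y ^ 2 / 2) (-1 + y) y := by
      have := ((hasDerivAt_id y).pow 2).div_const 2
      have := (hasDerivAt_id y).neg.add this
      simp at this; exact this
    have h2 := h1.exp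
    have h3 : HasDerivAt (fun y : ℝ => 1 + y) 1 y := by
      have := (hasDerivAt_const y (1:ℝ)).add (hasDerivAt_id y)
      simp at this; exact this
    have := h3.mul h2
    exact this.congr_deriv (by ring)
  have hmono : MonotoneOn f (Set.Ici (0:ℝ)) := by
    apply monotoneOn_of_deriv_nonneg (convex_Ici 0)
    · exact (Continuous.mul (by continuity) (Real.continuous_exp.comp (by continuity))).continuousOn
    · intro y _
      exact (hderiv y).differentiableAt.differentiableWithinAt
    · intro y hy
      rw [(hderiv y).deriv]
      positivity
  have := hmono (Set.mem_Ici.mpr le_rfl) (Set.mem_Ici.mpr hx) hx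
  simpa [hf] using this

private lemma step : ∀ x : ℝ, 0 ≤ x → Real.exp (-x) + x - 1 ≤ x ^ 2 / 2 := by
  intro x hx
  have h := aux1 hx
  have hpos : 0 < 1 - x + x ^ 2 / 2 := by nlinarith [sq_nonneg (x - 1)]
  have hexp : Real.exp (-x) ≤ 1 - x + x ^ 2 / 2 := by
    rw [Real.exp_neg, inv_le_iff_one_le_mul₀ (Real.exp_pos x)]
    linarith [h]
  linarith

/-- Delyon-type inequality underlying the 'SN II' condition:
`exp(x − x₊²/2) ≤ 1 + x + x₋²/2` for all real `x` (where `x₊ = max(x,0)` and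
`x₋ = max(−x,0)`); a step of the proof is `e^{−x} + x − 1 ≤ x²/2` for `x ≥ 0`. -/
theorem sn_two_inequality :
    (∀ x : ℝ, Real.exp (x - max x 0 ^ 2 / 2) ≤ 1 + x + max (-x) 0 ^ 2 / 2) ∧
    (∀ x : ℝ, 0 ≤ x → Real.exp (-x) + x - 1 ≤ x ^ 2 / 2) := by
  refine ⟨fun x => ?_, step⟩
  rcases le_or_gt 0 x with hx | hx
  · rw [max_eq_left hx, max_eq_right (by linarith)]
    have h := aux2 hx
    have : Real.exp (x - x ^ 2 / 2) ≤ 1 + x := by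
      have hep : (0:ℝ) < Real.exp (-x + x ^ 2 / 2) := Real.exp_pos _
      have := (div_le_iff₀ hep).mpr (by linarith [h] : 1 ≤ (1 + x) * Real.exp (-x + x ^ 2 / 2))
      calc Real.exp (x - x ^ 2 / 2) = 1 / Real.exp (-x + x ^ 2 / 2) := by
            rw [one_div, ← Real.exp_neg]; ring_nf
        _ ≤ 1 + x := this
    linarith [this, sq_nonneg (0:ℝ)]
  · rw [max_eq_right hx.le, max_eq_left (by linarith)]
    have h := step (-x) (by linarith)
    simp only [neg_neg] at h
    have : Real.exp (x - 0 ^ 2 / 2) = Real.exp x := by norm_num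
    rw [this]
    nlinarith [h]
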